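/- arXiv:2201.09414 — 3 statements merged into one kernel-verified Lean document; each statement's English description precedes it below -/
import Mathlib

section
/- The function f_s(x,y) = xy(2 − 2y + xy)/(1 − y + xy)² is strictly increasing in x on (0,1] for any fixed y ∈ (0,1), and strictly increasing in y on (0,1) for any fixed x ∈ (0,1]. Moreover f_s(0,y) = f_s(x,0) = 0. -/
/-- f_s(x,y) = xy(2-2y+xy)/(1-y+xy)² is strictly increasing in x on
(0,1] for fixed y ∈ (0,1), strictly increasing in y on (0,1) for fixed
x ∈ (0,1], and f_s(0,y) = f_s(x,0) = 0. -/
theorem stmt7 :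
    let fs : ℝ → ℝ → ℝ := fun x y => x * y * (2 - 2 * y + x * y) / (1 - y + x * y) ^ 2
    (∀ y ∈ Set.Ioo (0:ℝ) 1, StrictMonoOn (fun x => fs x y) (Set.Ioc (0:ℝ) 1))
    ∧ (∀ x ∈ Set.Ioc (0:ℝ) 1, StrictMonoOn (fun y => fs x y) (Set.Ioo (0:ℝ) 1))
    ∧ (∀ y : ℝ, fs 0 y = 0) ∧ (∀ x : ℝ, fs x 0 = 0) := by
  intro fs
  refine ⟨?_, ?_, ?_, ?_⟩
  · rintro y ⟨hy0, hy1⟩ a ⟨ha0, _⟩ b ⟨hb0, _⟩ hab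
    have hda : (0:ℝ) < 1 - y + a * y := by nlinarith
    have hdb : (0:ℝ) < 1 - y + b * y := by nlinarith
    simp only [fs]
    rw [div_lt_div_iff₀ (by positivity) (by positivity)]
    have key : b * y * (2 - 2 * y + b * y) * (1 - y + a * y) ^ 2
        - a * y * (2 - 2 * y + a * y) * (1 - y + b * y) ^ 2
        = y * (b - a) * (1 - y) ^ 2 * (2 * (1 - y) + (a + b) * y) := by ring
    nlinarith [mul_pos (mul_pos (mul_pos hy0 (sub_pos.mpr hab))
      (pow_pos (sub_pos.mpr hy1) 2)) (by nlinarith : (0:ℝ) < 2 * (1 - y) + (a + b) * y)]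
  · rintro x ⟨hx0, _⟩ a ⟨ha0, ha1⟩ b ⟨hb0, hb1⟩ hab
    have hda : (0:ℝ) < 1 - a + x * a := by nlinarith
    have hdb : (0:ℝ) < 1 - b + x * b := by nlinarith
    simp only [fs]
    rw [div_lt_div_iff₀ (by positivity) (by positivity)]
    have key : x * b * (2 - 2 * b + x * b) * (1 - a + x * a) ^ 2
        - x * a * (2 - 2 * a + x * a) * (1 - b + x * b) ^ 2
        = x * (b - a) * ((1 - a) * (1 - b + x * b) + (1 - b) * (1 - a + x * a)) := by ring
    nlinarith [mul_pos (mul_pos hx0 (sub_pos.mpr hab))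
      (by nlinarith [mul_pos (sub_pos.mpr ha1) hdb, mul_pos (sub_pos.mpr hb1) hda] :
        (0:ℝ) < (1 - a) * (1 - b + x * b) + (1 - b) * (1 - a + x * a))]
  · intro y; simp [fs]
  · intro x; simp [fs]
end

section
/- For integer q ≥ 2, the point x* = 4q(q−1)/(2q−1)² satisfies 0 < x* < 1, and a(x*) = (x*)^{2q−2}(2q/(2q−1) − x*) satisfies 2q·a(x*) − 1 ≤ 1/q. -/
set_option maxHeartbeats 1000000 in
/-- For integer q ≥ 2, x* = 4q(q−1)/(2q−1)² satisfies 0 < x* < 1,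
and a(x*) = (x*)^{2q−2}(2q/(2q−1) − x*) satisfies 2q·a(x*) − 1 ≤ 1/q. -/
theorem stmt11 (q : ℕ) (hq : 2 ≤ q) :
    let xs : ℝ := 4 * (q : ℝ) * ((q : ℝ) - 1) / (2 * (q : ℝ) - 1) ^ 2
    let axs : ℝ := xs ^ (2 * q - 2) * (2 * (q : ℝ) / (2 * (q : ℝ) - 1) - xs)
    0 < xs ∧ xs < 1 ∧ 2 * (q : ℝ) * axs - 1 ≤ 1 / (q : ℝ) := by
  intro xs axs
  have hq2 : (2:ℝ) ≤ (q:ℝ) := by exact_mod_cast hq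
  set Q : ℝ := (q:ℝ) with hQ
  have hd : (0:ℝ) < 2*Q - 1 := by linarith
  have hd2 : (0:ℝ) < (2*Q-1)^2 := by positivity
  have hd2' : ((2*Q-1)^2 : ℝ) ≠ 0 := ne_of_gt hd2
  have hxs_pos : 0 < xs := by
    have : (0:ℝ) < 4*Q*(Q-1) := by nlinarith
    exact div_pos this hd2
  have hxs_lt : xs < 1 := by
    rw [div_lt_one hd2]; nlinarith
  refine ⟨hxs_pos, hxs_lt, ?_⟩
  set t : ℝ := 1/(2*Q-1)^2 with ht
  have ht_pos : 0 < t := by positivity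
  have ht_le : t ≤ 1/9 := by
    rw [ht, div_le_div_iff₀ hd2 (by norm_num)]; nlinarith
  have hxs_eq : xs = 1 - t := by
    show 4*Q*(Q-1)/(2*Q-1)^2 = 1 - 1/(2*Q-1)^2
    rw [eq_sub_iff_add_eq, ← add_div, div_eq_one_iff_eq hd2']
    ring
  set n : ℕ := 2*q - 2 with hn
  have hncast : (n:ℝ) = 2*Q - 2 := by
    rw [hn]; push_cast [Nat.cast_sub (by omega : 2 ≤ 2*q)]; ring
  -- Bernoulli
  have hB : 1 + (n:ℝ)*t ≤ (1+t)^n := by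
    have := one_add_mul_le_pow (a := t) (by linarith) n
    linarith
  have hBpos : (0:ℝ) < 1 + (n:ℝ)*t := by
    have : (0:ℝ) ≤ (n:ℝ)*t := by positivity
    linarith
  have hmul : (1-t)^n * (1+t)^n ≤ 1 := by
    rw [← mul_pow]
    have h1 : (0:ℝ) ≤ (1-t)*(1+t) := by nlinarith
    have h2 : (1-t)*(1+t) ≤ 1 := by nlinarith
    exact pow_le_one₀ h1 h2
  have hkey : (1-t)^n ≤ 1/(1 + (n:ℝ)*t) := by
    rw [le_div_iff₀ hBpos]
    calc (1-t)^n * (1 + (n:ℝ)*t) ≤ (1-t)^n * (1+t)^n := by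
          apply mul_le_mul_of_nonneg_left hB (pow_nonneg (by linarith) n)
      _ ≤ 1 := hmul
  have hxn : xs ^ n ≤ 1/(1 + (n:ℝ)*t) := by rw [hxs_eq]; exact hkey
  -- compute 1 + n*t
  have hpoly_pos : (0:ℝ) < 4*Q^2 - 2*Q - 1 := by nlinarith
  have hnt : 1 + (n:ℝ)*t = (4*Q^2 - 2*Q - 1)/(2*Q-1)^2 := by
    rw [hncast, ht]; field_simp; ring
  have hxn2 : xs ^ n ≤ (2*Q-1)^2/(4*Q^2 - 2*Q - 1) := by
    calc xs ^ n ≤ 1/(1 + (n:ℝ)*t) := hxn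
      _ = (2*Q-1)^2/(4*Q^2 - 2*Q - 1) := by rw [hnt, one_div_div]
  -- the second factor of axs
  have hfac : 2*Q/(2*Q-1) - xs = 2*Q/(2*Q-1)^2 := by
    show 2*Q/(2*Q-1) - 4*Q*(Q-1)/(2*Q-1)^2 = 2*Q/(2*Q-1)^2
    rw [div_sub_div _ _ (ne_of_gt hd) hd2', div_eq_div_iff (by positivity) hd2']
    ring
  have haxs : 2*Q*axs = xs ^ n * (4*Q^2/(2*Q-1)^2) := by
    show 2*Q*(xs ^ n * (2*Q/(2*Q-1) - xs)) = _
    rw [hfac]; field_simp; ring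
  have hfinal : 2*Q*axs ≤ 4*Q^2/(4*Q^2 - 2*Q - 1) := by
    rw [haxs]
    calc xs ^ n * (4*Q^2/(2*Q-1)^2) ≤ ((2*Q-1)^2/(4*Q^2 - 2*Q - 1)) * (4*Q^2/(2*Q-1)^2) := by
          apply mul_le_mul_of_nonneg_right hxn2 (by positivity)
      _ = 4*Q^2/(4*Q^2 - 2*Q - 1) := by field_simp
  have hQpos : (0:ℝ) < Q := by linarith
  have hlast : 4*Q^2/(4*Q^2 - 2*Q - 1) ≤ 1 + 1/Q := by
    rw [div_le_iff₀ hpoly_pos]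
    have h1 : 1/Q * Q = 1 := by field_simp
    have h2 : (0:ℝ) ≤ 1/Q := by positivity
    nlinarith [mul_pos hQpos hpoly_pos, mul_le_mul_of_nonneg_right (le_of_eq h1.symm) (le_of_lt hpoly_pos)]
  linarith
end

section
/- Fix ρ ∈ (0,1) and define for a > 0 the function ε₂(a) = (−((1−ρ)/ρ·a+1) + √(((1−ρ)/ρ·a+1)² + 4a))/(2a). Then ε₂ is strictly decreasing in a on (0,∞). -/
/-- For fixed ρ ∈ (0,1), the function
ε₂(a) = (−((1−ρ)/ρ·a+1) + √(((1−ρ)/ρ·a+1)² + 4a))/(2a) is strictly decreasing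
in a on (0,∞). -/
theorem stmt15 (ρ : ℝ) (hρ : ρ ∈ Set.Ioo (0:ℝ) 1) :
    StrictAntiOn
      (fun a : ℝ =>
        (-((1 - ρ) / ρ * a + 1) + Real.sqrt (((1 - ρ) / ρ * a + 1) ^ 2 + 4 * a)) / (2 * a))
      (Set.Ioi (0:ℝ)) := by
  obtain ⟨hρ0, hρ1⟩ := hρ
  have hc : 0 ≤ (1 - ρ) / ρ := div_nonneg (by linarith) hρ0.le
  set c := (1 - ρ) / ρ with hcdef
  have key : ∀ a : ℝ, 0 < a →
      0 < (-(c * a + 1) + Real.sqrt ((c * a + 1) ^ 2 + 4 * a)) / (2 * a) ∧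
      a * ((-(c * a + 1) + Real.sqrt ((c * a + 1) ^ 2 + 4 * a)) / (2 * a)) ^ 2 +
        (c * a + 1) * ((-(c * a + 1) + Real.sqrt ((c * a + 1) ^ 2 + 4 * a)) / (2 * a)) - 1 = 0 := by
    intro a ha
    have ht : 0 < c * a + 1 := by nlinarith
    have hD : 0 ≤ (c * a + 1) ^ 2 + 4 * a := by nlinarith
    have hs : Real.sqrt ((c * a + 1) ^ 2 + 4 * a) ^ 2 = (c * a + 1) ^ 2 + 4 * a :=
      Real.sq_sqrt hD
    have hs0 : 0 ≤ Real.sqrt ((c * a + 1) ^ 2 + 4 * a) := Real.sqrt_nonneg _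
    have hst : c * a + 1 < Real.sqrt ((c * a + 1) ^ 2 + 4 * a) := by nlinarith
    constructor
    · apply div_pos (by linarith) (by linarith)
    · field_simp
      ring_nf at hs ⊢
      nlinarith [hs]
  intro a ha b hb hab
  simp only [Set.mem_Ioi] at ha hb
  obtain ⟨hxa, hea⟩ := key a ha
  obtain ⟨hxb, heb⟩ := key b hb
  set x := (-(c * a + 1) + Real.sqrt ((c * a + 1) ^ 2 + 4 * a)) / (2 * a) with hx
  set y := (-(c * b + 1) + Real.sqrt ((c * b + 1) ^ 2 + 4 * b)) / (2 * b) with hy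
  show y < x
  by_contra h
  push_neg at h
  nlinarith [mul_pos (sub_pos.mpr hab) (mul_pos hxa hxa), mul_nonneg hc (mul_nonneg (sub_pos.mpr hab).le hxa.le), mul_nonneg hb.le (mul_nonneg (sub_nonneg.mpr h) (by linarith : (0:ℝ) ≤ y + x)), mul_nonneg (mul_nonneg hc hb.le) (sub_nonneg.mpr h)]
end
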